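/- For the Drach (k)-potential Hamiltonian H₁ = p_x p_y + αy^{-1/2} + βxy^{-1/2} + γx on y > 0, the cubic function K₃ = 6(-y)(∂H₁/∂x · p_y - p_x · ∂H₁/∂y) - 3p_x²p_y satisfies {H₁, K₃} = 0. -/

import Mathlib

noncomputable def pb (F G : ℝ → ℝ → ℝ → ℝ → ℝ) (x y px py : ℝ) : ℝ :=
  deriv (fun t => F x y t py) px * deriv (fun t => G t y px py) x
  - deriv (fun t => F t y px py) x * deriv (fun t => G x y t py) px
  + deriv (fun t => F x y px t) py * deriv (fun t => G x t px py) y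
  - deriv (fun t => F x t px py) y * deriv (fun t => G x y px t) py

noncomputable def H₁k (α β γ : ℝ) : ℝ → ℝ → ℝ → ℝ → ℝ :=
  fun x y px py => px*py + α / Real.sqrt y + β*x / Real.sqrt y + γ*x

noncomputable def K₃k (α β γ : ℝ) : ℝ → ℝ → ℝ → ℝ → ℝ :=
  fun x y px py =>
    6*(-y) * ((β / Real.sqrt y + γ) * py
      - px * (-(α + β*x) / (2 * y * Real.sqrt y)))
    - 3*px^2*py

theorem stmt14 (α β γ : ℝ) (x y px py : ℝ) (hy : 0 < y) :
    pb (H₁k α β γ) (K₃k α β γ) x y px py = 0 := by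
  have hy0 : y ≠ 0 := hy.ne'
  have hs0 : 0 < Real.sqrt y := Real.sqrt_pos.mpr hy
  have hs : Real.sqrt y ≠ 0 := hs0.ne'
  have hs2 : Real.sqrt y * Real.sqrt y = y := Real.mul_self_sqrt hy.le
  have hsq : HasDerivAt Real.sqrt (1 / (2 * Real.sqrt y)) y := Real.hasDerivAt_sqrt hy0
  set s := Real.sqrt y with hsdef
  -- ∂H/∂px
  have hHpx : deriv (fun t => H₁k α β γ x y t py) px = py := by
    have h : HasDerivAt (fun t : ℝ => H₁k α β γ x y t py) (1 * py) px := by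
      simpa [H₁k] using
        ((((hasDerivAt_id px).mul_const py).add_const (α / s)).add_const
          (β * x / s)).add_const (γ * x)
    simpa using h.deriv
  -- ∂H/∂x
  have hHx : deriv (fun t => H₁k α β γ t y px py) x = β * 1 / s + γ * 1 := by
    have h : HasDerivAt (fun t : ℝ => H₁k α β γ t y px py)
        (β * 1 / s + γ * 1) x := by
      have h1 : HasDerivAt (fun t : ℝ => β * t / s) (β * 1 / s) x :=
        ((hasDerivAt_id x).const_mul β).div_const s
      have h2 : HasDerivAt (fun t : ℝ => γ * t) (γ * 1) x :=
        (hasDerivAt_id x).const_mul γ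
      simpa [H₁k, Pi.add_def] using ((h1.const_add (px * py + α / s)).add h2)
    exact h.deriv
  -- ∂H/∂py
  have hHpy : deriv (fun t => H₁k α β γ x y px t) py = px * 1 := by
    have h : HasDerivAt (fun t : ℝ => H₁k α β γ x y px t) (px * 1) py := by
      simpa [H₁k] using
        ((((hasDerivAt_id py).const_mul px).add_const (α / s)).add_const
          (β * x / s)).add_const (γ * x)
    exact h.deriv
  -- ∂H/∂y
  have hHy : deriv (fun t => H₁k α β γ x t px py) y =
      (0 * s - α * (1 / (2 * s))) / s ^ 2 + (0 * s - β * x * (1 / (2 * s))) / s ^ 2 := by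
    have h1 : HasDerivAt (fun t : ℝ => α / Real.sqrt t)
        ((0 * s - α * (1 / (2 * s))) / s ^ 2) y :=
      (hasDerivAt_const y α).div hsq hs
    have h2 : HasDerivAt (fun t : ℝ => β * x / Real.sqrt t)
        ((0 * s - β * x * (1 / (2 * s))) / s ^ 2) y :=
      (hasDerivAt_const y (β * x)).div hsq hs
    have h : HasDerivAt (fun t : ℝ => H₁k α β γ x t px py)
        ((0 * s - α * (1 / (2 * s))) / s ^ 2 + (0 * s - β * x * (1 / (2 * s))) / s ^ 2) y := by
      simpa [H₁k] using (((h1.const_add (px * py)).add h2).add_const (γ * x))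
    exact h.deriv
  -- ∂K/∂x
  have hKx : deriv (fun t => K₃k α β γ t y px py) x =
      6 * -y * -(px * (-(0 + β * 1) / (2 * y * s))) := by
    have hinner : HasDerivAt (fun t : ℝ => -(α + β * t) / (2 * y * Real.sqrt y))
        (-(0 + β * 1) / (2 * y * s)) x :=
      (((hasDerivAt_const x α).add ((hasDerivAt_id x).const_mul β)).neg).div_const _
    have h : HasDerivAt (fun t : ℝ => K₃k α β γ t y px py)
        (6 * -y * -(px * (-(0 + β * 1) / (2 * y * s)))) x := by
      simpa [K₃k] using
        ((((hinner.const_mul px).const_sub ((β / s + γ) * py)).const_mul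
          (6 * -y)).sub_const (3 * px ^ 2 * py))
    exact h.deriv
  -- ∂K/∂px
  have hKpx : deriv (fun t => K₃k α β γ x y t py) px =
      6 * -y * -(1 * (-(α + β * x) / (2 * y * s))) - 3 * (↑2 * px ^ 1) * py := by
    have h1 : HasDerivAt (fun t : ℝ => t * (-(α + β * x) / (2 * y * Real.sqrt y)))
        (1 * (-(α + β * x) / (2 * y * s))) px :=
      (hasDerivAt_id px).mul_const _
    have h2 : HasDerivAt (fun t : ℝ => 3 * t ^ 2 * py)
        (3 * (↑2 * px ^ 1) * py) px :=
      ((hasDerivAt_pow 2 px).const_mul 3).mul_const py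
    have h : HasDerivAt (fun t : ℝ => K₃k α β γ x y t py)
        (6 * -y * -(1 * (-(α + β * x) / (2 * y * s))) - 3 * (↑2 * px ^ 1) * py) px := by
      simpa [K₃k, Pi.sub_def] using
        (((h1.const_sub ((β / s + γ) * py)).const_mul (6 * -y)).sub h2)
    exact h.deriv
  -- ∂K/∂py
  have hKpy : deriv (fun t => K₃k α β γ x y px t) py =
      6 * -y * ((β / s + γ) * 1) - 3 * px ^ 2 * 1 := by
    have h : HasDerivAt (fun t : ℝ => K₃k α β γ x y px t)
        (6 * -y * ((β / s + γ) * 1) - 3 * px ^ 2 * 1) py := by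
      have h1 : HasDerivAt (fun t : ℝ => (β / s + γ) * t) ((β / s + γ) * 1) py :=
        (hasDerivAt_id py).const_mul _
      have h2 : HasDerivAt (fun t : ℝ => 3 * px ^ 2 * t) (3 * px ^ 2 * 1) py :=
        (hasDerivAt_id py).const_mul _
      simpa [K₃k, mul_comm, Pi.sub_def] using
        (((h1.sub_const (px * (-(α + β * x) / (2 * y * s)))).const_mul (6 * -y)).sub h2)
    exact h.deriv
  -- ∂K/∂y
  have hden : HasDerivAt (fun t : ℝ => 2 * t * Real.sqrt t)
      (2 * 1 * s + 2 * y * (1 / (2 * s))) y :=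
    ((hasDerivAt_id y).const_mul 2).mul hsq
  have hKy : deriv (fun t => K₃k α β γ x t px py) y =
      (6 * -1) * ((β / s + γ) * py - px * (-(α + β * x) / (2 * y * s)))
      + 6 * -y * (((0 * s - β * (1 / (2 * s))) / s ^ 2) * py
        - px * ((0 * (2 * y * s) - -(α + β * x) * (2 * 1 * s + 2 * y * (1 / (2 * s)))) / (2 * y * s) ^ 2)) := by
    have h1 : HasDerivAt (fun t : ℝ => β / Real.sqrt t)
        ((0 * s - β * (1 / (2 * s))) / s ^ 2) y :=
      (hasDerivAt_const y β).div hsq hs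
    have hd0 : (2 : ℝ) * y * s ≠ 0 := by positivity
    have h2 : HasDerivAt (fun t : ℝ => -(α + β * x) / (2 * t * Real.sqrt t))
        ((0 * (2 * y * s) - -(α + β * x) * (2 * 1 * s + 2 * y * (1 / (2 * s)))) / (2 * y * s) ^ 2) y :=
      (hasDerivAt_const y (-(α + β * x))).div hden hd0
    have hinner : HasDerivAt (fun t : ℝ =>
        (β / Real.sqrt t + γ) * py - px * (-(α + β * x) / (2 * t * Real.sqrt t)))
        (((0 * s - β * (1 / (2 * s))) / s ^ 2) * py
          - px * ((0 * (2 * y * s) - -(α + β * x) * (2 * 1 * s + 2 * y * (1 / (2 * s)))) / (2 * y * s) ^ 2)) y :=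
      ((h1.add_const γ).mul_const py).sub (h2.const_mul px)
    have houter : HasDerivAt (fun t : ℝ => 6 * -t)
        (6 * -1) y := (hasDerivAt_id y).neg.const_mul 6
    have h : HasDerivAt (fun t : ℝ => K₃k α β γ x t px py)
        ((6 * -1) * ((β / s + γ) * py - px * (-(α + β * x) / (2 * y * s)))
        + 6 * -y * (((0 * s - β * (1 / (2 * s))) / s ^ 2) * py
          - px * ((0 * (2 * y * s) - -(α + β * x) * (2 * 1 * s + 2 * y * (1 / (2 * s)))) / (2 * y * s) ^ 2))) y := by
      simpa [K₃k] using ((houter.mul hinner).sub_const (3 * px ^ 2 * py))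
    exact h.deriv
  simp only [pb, hHpx, hHx, hHpy, hHy, hKx, hKpx, hKpy, hKy]
  rw [← hs2]
  field_simp
  ring
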